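/- Let G = (U,α,φ_G) and H = (V,β,φ_H) be two fully supported weighted labeled graphs, and let c_Φ(u,v) = 1 if φ_G(u) ≠ φ_H(v) and 0 otherwise. If ρ_{c_Φ}(G,H) = 0 and γ is an optimal weight joining (γ ∈ J(α,β) with ⟨c_Φ, r_γ⟩ = 0) that is bijective, then the induced map f_γ : U → V is a graph isomorphism from G to H. -/
import Mathlib


open Finset

def IsWeightFunction {U : Type*} [Fintype U] (α : U → U → ℝ) : Prop :=
  (∀ u u', 0 ≤ α u u') ∧ (∀ u u', α u u' = α u' u) ∧ (∑ u, ∑ u', α u u' = 1)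

noncomputable def marginal {U : Type*} [Fintype U] (α : U → U → ℝ) (u : U) : ℝ :=
  ∑ u', α u u'

def IsWeightJoining {U V : Type*} [Fintype U] [Fintype V]
    (α : U → U → ℝ) (β : V → V → ℝ) (γ : U × V → U × V → ℝ) : Prop :=
  IsWeightFunction γ ∧
  (∀ u, ∑ v, marginal γ (u, v) = marginal α u) ∧
  (∀ v, ∑ u, marginal γ (u, v) = marginal β v) ∧
  (∀ u u' v, marginal α u * ∑ v', γ (u, v) (u', v') = α u u' * marginal γ (u, v)) ∧
  (∀ v v' u, marginal β v * ∑ u', γ (u, v) (u', v') = β v v' * marginal γ (u, v))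

def weightJoinings {U V : Type*} [Fintype U] [Fintype V]
    (α : U → U → ℝ) (β : V → V → ℝ) : Set (U × V → U × V → ℝ) :=
  {γ | IsWeightJoining α β γ}

noncomputable def ogjCost {U V : Type*} [Fintype U] [Fintype V]
    (c : U → V → ℝ) (γ : U × V → U × V → ℝ) : ℝ :=
  ∑ p : U × V, c p.1 p.2 * marginal γ p

/-- A weight joining is bijective if each `u ∈ U` has a unique `v ∈ V` with positive
joint marginal and vice versa. -/
def IsBijectiveJoining {U V : Type*} [Fintype U] [Fintype V]
    (γ : U × V → U × V → ℝ) : Prop :=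
  (∀ u : U, ∃! v : V, 0 < marginal γ (u, v)) ∧ (∀ v : V, ∃! u : U, 0 < marginal γ (u, v))

open Classical in
/-- The 0-1 label-agreement cost function induced by label functions. -/
noncomputable def labelCost {U V A : Type*} (ψG : U → A) (ψH : V → A) : U → V → ℝ :=
  fun u v => if ψG u = ψH v then 0 else 1

/-- Let `G` and `H` be fully supported labeled graphs with label cost
`c_Φ`.  If `ρ_{c_Φ}(G,H) = 0` and `γ` is an optimal weight joining (i.e.
`γ ∈ J(α,β)` with `⟨c_Φ, r_γ⟩ = 0`) which is bijective, then the induced map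
`f_γ` (the map sending each `u` to the unique `v` with `r_γ(u,v) > 0`) is a graph
isomorphism from `G` to `H`. -/
theorem bijective_optimal_joining_induces_isomorphism
    {U V L : Type*} [Fintype U] [Fintype V]
    (α : U → U → ℝ) (β : V → V → ℝ)
    (hα : IsWeightFunction α) (hβ : IsWeightFunction β)
    (hαfull : ∀ u, 0 < marginal α u) (hβfull : ∀ v, 0 < marginal β v)
    (φG : U → L) (φH : V → L)
    (hρ : IsLeast {x : ℝ | ∃ γ' ∈ weightJoinings α β, x = ogjCost (labelCost φG φH) γ'} 0)
    (γ : U × V → U × V → ℝ)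
    (hγ : γ ∈ weightJoinings α β)
    (hcost : ogjCost (labelCost φG φH) γ = 0)
    (hbij : IsBijectiveJoining γ) :
    ∀ f : U → V, (∀ u : U, 0 < marginal γ (u, f u)) →
      Function.Bijective f ∧
      (∀ u u' : U, α u u' = β (f u) (f u')) ∧
      (∀ u : U, φG u = φH (f u)) := by
  intro f hf
  obtain ⟨hγW, hγα, hγβ, hγtα, hγtβ⟩ := hγ
  obtain ⟨hγnn, hγsymm, -⟩ := hγW
  obtain ⟨hbU, hbV⟩ := hbij
  have hrnn : ∀ p : U × V, 0 ≤ marginal γ p :=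
    fun p => Finset.sum_nonneg fun q _ => hγnn p q
  have hzero : ∀ u v, v ≠ f u → marginal γ (u, v) = 0 := by
    intro u v hv
    by_contra h
    exact hv ((hbU u).unique (lt_of_le_of_ne (hrnn _) (Ne.symm h)) (hf u))
  have hinj : Function.Injective f := by
    intro u u' h
    exact (hbV (f u)).unique (hf u) (h ▸ hf u')
  have hsurj : Function.Surjective f := by
    intro v
    obtain ⟨u, hu, -⟩ := hbV v
    exact ⟨u, (hbU u).unique (hf u) hu⟩
  -- γ values vanish off the graph of f
  have hγzero : ∀ (p : U × V) (u' : U) (v' : V), v' ≠ f u' → γ p (u', v') = 0 := by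
    intro p u' v' hv'
    have h1 : γ (u', v') p ≤ marginal γ (u', v') :=
      Finset.single_le_sum (fun q _ => hγnn (u', v') q) (Finset.mem_univ p)
    have h2 : marginal γ (u', v') = 0 := hzero u' v' hv'
    have := hγsymm p (u', v')
    nlinarith [hγnn p (u', v')]
  -- p(u) = r(u, f u)
  have hpu : ∀ u, marginal α u = marginal γ (u, f u) := by
    intro u
    rw [← hγα u]
    exact Finset.sum_eq_single (f u) (fun v _ hv => hzero u v hv) (fun h => absurd (Finset.mem_univ _) h)
  -- q(f u) = r(u, f u)
  have hqv : ∀ u, marginal β (f u) = marginal γ (u, f u) := by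
    intro u
    rw [← hγβ (f u)]
    refine Finset.sum_eq_single u (fun u' _ hu' => hzero u' (f u) ?_) (fun h => absurd (Finset.mem_univ _) h)
    exact fun h => hu' (hinj h.symm)
  -- sum collapse over v'
  have hsumv : ∀ u u', (∑ v', γ (u, f u) (u', v')) = γ (u, f u) (u', f u') := by
    intro u u'
    exact Finset.sum_eq_single (f u') (fun v' _ hv' => hγzero _ _ _ hv')
      (fun h => absurd (Finset.mem_univ _) h)
  -- sum collapse over u''
  have hsumu : ∀ u u', (∑ u'', γ (u, f u) (u'', f u')) = γ (u, f u) (u', f u') := by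
    intro u u'
    refine Finset.sum_eq_single u' (fun u'' _ hu'' => hγzero _ _ _ ?_)
      (fun h => absurd (Finset.mem_univ _) h)
    exact fun h => hu'' (hinj h.symm)
  refine ⟨⟨hinj, hsurj⟩, ?_, ?_⟩
  · intro u u'
    have h1 := hγtα u u' (f u)
    have h2 := hγtβ (f u) (f u') u
    rw [hsumv u u'] at h1
    rw [hsumu u u'] at h2
    have hr : 0 < marginal γ (u, f u) := hf u
    rw [hpu u] at h1
    rw [hqv u] at h2
    exact mul_right_cancel₀ hr.ne' (h1.symm.trans h2)
  · intro u
    have hterm : ∀ p : U × V, p ∈ Finset.univ →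
        0 ≤ labelCost φG φH p.1 p.2 * marginal γ p := by
      intro p _
      refine mul_nonneg ?_ (hrnn p)
      unfold labelCost
      split <;> norm_num
    have hall := (Finset.sum_eq_zero_iff_of_nonneg hterm).mp hcost (u, f u) (Finset.mem_univ _)
    by_contra hne
    have : labelCost φG φH u (f u) = 1 := by
      unfold labelCost; simp [hne]
    rw [this, one_mul] at hall
    exact (hf u).ne' hall
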